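/- arXiv:1309.0381 — 6 statements merged into one kernel-verified Lean document; each statement's English description precedes it below -/
import Mathlib

section
/- For |q| < 1, the Lambert series identity holds: ∑_{j=1}^∞ q^j/(1-q^j) = ∑_{j=1}^∞ q^{j²}(1+q^j)/(1-q^j). -/
open Set

def eqLe : ℕ × ℕ ≃ ↥({p : ℕ × ℕ | p.1 ≤ p.2}) where
  toFun x := ⟨(x.1, x.1 + x.2), by simp [Set.mem_setOf_eq]⟩
  invFun y := (y.1.1, y.1.2 - y.1.1)
  left_inv x := by ext <;> simp
  right_inv y := by
    obtain ⟨⟨a, b⟩, h⟩ := y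
    simp only [Set.mem_setOf_eq] at h
    exact Subtype.ext (by ext <;> simp <;> omega)

def eqGt : ℕ × ℕ ≃ ↥({p : ℕ × ℕ | p.1 ≤ p.2}ᶜ) where
  toFun x := ⟨(x.1 + 1 + x.2, x.1), by simp [Set.mem_compl_iff, Set.mem_setOf_eq]; omega⟩
  invFun y := (y.1.2, y.1.1 - y.1.2 - 1)
  left_inv x := by ext <;> simp <;> omega
  right_inv y := by
    obtain ⟨⟨a, b⟩, h⟩ := y
    simp only [Set.mem_compl_iff, Set.mem_setOf_eq] at h
    exact Subtype.ext (by ext <;> simp <;> omega)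

/-- Lambert series identity: `∑_{j≥1} q^j/(1-q^j) = ∑_{j≥1} q^{j²}(1+q^j)/(1-q^j)` for `|q| < 1`. -/
theorem lambert_square_identity (q : ℂ) (hq : ‖q‖ < 1) :
    ∑' j : ℕ, q ^ (j + 1) / (1 - q ^ (j + 1)) =
      ∑' j : ℕ, q ^ ((j + 1) ^ 2) * (1 + q ^ (j + 1)) / (1 - q ^ (j + 1)) := by
  set r := ‖q‖ with hr
  have hr0 : 0 ≤ r := norm_nonneg q
  have hr1 : r < 1 := hq
  set F : ℕ × ℕ → ℂ := fun p => q ^ ((p.1 + 1) * (p.2 + 1)) with hF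
  have hgeo : Summable fun n : ℕ => r ^ n := summable_geometric_of_lt_one hr0 hr1
  have hbound : Summable fun p : ℕ × ℕ => r ^ p.1 * r ^ p.2 * r :=
    (hgeo.mul_of_nonneg hgeo (fun n => pow_nonneg hr0 n) fun n => pow_nonneg hr0 n).mul_right r
  have hFsum : Summable F := by
    apply Summable.of_norm_bounded hbound
    intro p
    have h0 : ‖F p‖ = r ^ ((p.1 + 1) * (p.2 + 1)) := by
      rw [hF]; exact norm_pow q _
    rw [h0]
    calc r ^ ((p.1 + 1) * (p.2 + 1)) ≤ r ^ (p.1 + p.2 + 1) := by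
          apply pow_le_pow_of_le_one hr0 hr1.le; nlinarith
      _ = r ^ p.1 * r ^ p.2 * r := by ring
  have hqj : ∀ j : ℕ, ‖q ^ (j + 1)‖ < 1 := fun j => by
    rw [norm_pow]; exact pow_lt_one₀ hr0 hr1 (Nat.succ_ne_zero j)
  have hne : ∀ j : ℕ, 1 - q ^ (j + 1) ≠ 0 := fun j => by
    intro h
    have : q ^ (j + 1) = 1 := by linear_combination -h
    simpa [this] using hqj j
  have hgeoC : ∀ j : ℕ, ∑' k : ℕ, (q ^ (j + 1)) ^ k = (1 - q ^ (j + 1))⁻¹ := fun j =>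
    tsum_geometric_of_norm_lt_one (hqj j)
  have hrow : ∀ j : ℕ, ∑' k : ℕ, F (j, k) = q ^ (j + 1) / (1 - q ^ (j + 1)) := by
    intro j
    have h1 : ∀ k : ℕ, F (j, k) = q ^ (j + 1) * (q ^ (j + 1)) ^ k := by
      intro k; simp only [hF]; rw [← pow_mul]; ring_nf
    calc ∑' k : ℕ, F (j, k) = ∑' k : ℕ, q ^ (j + 1) * (q ^ (j + 1)) ^ k := tsum_congr h1
      _ = q ^ (j + 1) * (1 - q ^ (j + 1))⁻¹ := by rw [tsum_mul_left, hgeoC j]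
      _ = q ^ (j + 1) / (1 - q ^ (j + 1)) := by rw [div_eq_mul_inv]
  set T := ∑' p : ℕ × ℕ, F p with hT
  have hLHS : ∑' j : ℕ, q ^ (j + 1) / (1 - q ^ (j + 1)) = T := by
    rw [hT, hFsum.tsum_prod]
    exact (tsum_congr hrow).symm
  set s : Set (ℕ × ℕ) := {p : ℕ × ℕ | p.1 ≤ p.2} with hs
  have hsub1 : Summable (F ∘ ((↑) : s → ℕ × ℕ)) := hFsum.subtype s
  have hsub2 : Summable (F ∘ ((↑) : ↥sᶜ → ℕ × ℕ)) := hFsum.subtype sᶜ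
  have hsplit : (∑' x : s, F x) + ∑' x : ↥sᶜ, F x = T := hsub1.tsum_add_tsum_compl hsub2
  have hG1 : Summable fun p : ℕ × ℕ => F (p.1, p.1 + p.2) :=
    (Equiv.summable_iff eqLe (f := F ∘ ((↑) : s → ℕ × ℕ))).2 hsub1
  have hG2 : Summable fun p : ℕ × ℕ => F (p.1 + 1 + p.2, p.1) :=
    (Equiv.summable_iff eqGt (f := F ∘ ((↑) : ↥sᶜ → ℕ × ℕ))).2 hsub2
  have hA : ∀ j : ℕ, ∑' k : ℕ, F (j, j + k) = q ^ ((j + 1) ^ 2) * (1 - q ^ (j + 1))⁻¹ := by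
    intro j
    have h1 : ∀ k : ℕ, F (j, j + k) = q ^ ((j + 1) ^ 2) * (q ^ (j + 1)) ^ k := by
      intro k
      simp only [hF, ← pow_mul, ← pow_add]
      congr 1; ring
    rw [tsum_congr h1, tsum_mul_left, hgeoC j]
  have hB : ∀ j : ℕ, ∑' k : ℕ, F (j + 1 + k, j)
      = q ^ ((j + 1) ^ 2) * q ^ (j + 1) * (1 - q ^ (j + 1))⁻¹ := by
    intro j
    have h1 : ∀ k : ℕ, F (j + 1 + k, j) = q ^ ((j + 1) ^ 2) * q ^ (j + 1) * (q ^ (j + 1)) ^ k := by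
      intro k
      simp only [hF, ← pow_mul, ← pow_add]
      congr 1; ring
    rw [tsum_congr h1, tsum_mul_left, hgeoC j]
  have hS1 : (∑' x : s, F x) = ∑' j : ℕ, q ^ ((j + 1) ^ 2) * (1 - q ^ (j + 1))⁻¹ := by
    refine ((Equiv.tsum_eq eqLe (fun x : s => F x)).symm.trans ?_)
    have h2 : ∀ p : ℕ × ℕ, F ((eqLe p : s) : ℕ × ℕ) = F (p.1, p.1 + p.2) := fun p => rfl
    rw [tsum_congr h2, hG1.tsum_prod]
    exact tsum_congr hA
  have hS2 : (∑' x : ↥sᶜ, F x)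
      = ∑' j : ℕ, q ^ ((j + 1) ^ 2) * q ^ (j + 1) * (1 - q ^ (j + 1))⁻¹ := by
    refine ((Equiv.tsum_eq eqGt (fun x : ↥sᶜ => F x)).symm.trans ?_)
    have h2 : ∀ p : ℕ × ℕ, F ((eqGt p : ↥sᶜ) : ℕ × ℕ) = F (p.1 + 1 + p.2, p.1) := fun p => rfl
    rw [tsum_congr h2, hG2.tsum_prod]
    exact tsum_congr hB
  have hA' : Summable fun j : ℕ => q ^ ((j + 1) ^ 2) * (1 - q ^ (j + 1))⁻¹ := by
    simpa [hA] using (hG1.prod : Summable fun j => ∑' k, F (j, j + k))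
  have hB' : Summable fun j : ℕ => q ^ ((j + 1) ^ 2) * q ^ (j + 1) * (1 - q ^ (j + 1))⁻¹ := by
    simpa [hB] using (hG2.prod : Summable fun j => ∑' k, F (j + 1 + k, j))
  rw [hLHS, ← hsplit, hS1, hS2, ← hA'.tsum_add hB']
  apply tsum_congr
  intro j
  have h := hne j
  field_simp
end

section
/- For |q| < 1, we have ∑_{j=1}^∞ q^{2j-1}/(1-q^{2j-1}) = ∑_{j=1}^∞ q^{j(j+1)/2}/(1-q^j). -/
/-- Expansion of a Lambert-type term as a geometric series. -/
lemma lambert_expand (q : ℂ) (hq : ‖q‖ < 1) (A B : ℕ) (hB : B ≠ 0) :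
    q ^ A / (1 - q ^ B) = ∑' k : ℕ, q ^ (A + B * k) := by
  have hqB : ‖q ^ B‖ < 1 := by
    rw [norm_pow]
    exact pow_lt_one₀ (norm_nonneg q) hq hB
  calc q ^ A / (1 - q ^ B)
      = q ^ A * (1 - q ^ B)⁻¹ := div_eq_mul_inv _ _
    _ = q ^ A * ∑' k : ℕ, (q ^ B) ^ k := by rw [tsum_geometric_of_norm_lt_one hqB]
    _ = ∑' k : ℕ, q ^ A * (q ^ B) ^ k := (tsum_mul_left).symm
    _ = ∑' k : ℕ, q ^ (A + B * k) := by
        refine tsum_congr fun k => ?_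
        rw [← pow_mul, ← pow_add]

/-- Summability of the double power series. -/
lemma lambert_summable (q : ℂ) (hq : ‖q‖ < 1) (L : ℕ × ℕ → ℕ)
    (hL : ∀ p, p.1 + p.2 + 1 ≤ L p) : Summable fun p : ℕ × ℕ => q ^ L p := by
  have h1 : Summable fun n : ℕ => ‖q‖ ^ n := summable_geometric_of_lt_one (norm_nonneg q) hq
  have h2 : Summable fun p : ℕ × ℕ => ‖q‖ ^ p.1 * ‖q‖ ^ p.2 :=
    h1.mul_of_nonneg h1 (fun n => pow_nonneg (norm_nonneg q) n)
      (fun n => pow_nonneg (norm_nonneg q) n)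
  have h3 : Summable fun p : ℕ × ℕ => ‖q‖ ^ p.1 * ‖q‖ ^ p.2 * ‖q‖ := h2.mul_right _
  refine Summable.of_norm_bounded h3 fun p => ?_
  rw [norm_pow]
  calc ‖q‖ ^ L p ≤ ‖q‖ ^ (p.1 + p.2 + 1) :=
        pow_le_pow_of_le_one (norm_nonneg q) hq.le (hL p)
    _ = ‖q‖ ^ p.1 * ‖q‖ ^ p.2 * ‖q‖ := by ring

/-- The odd-divisor bijection on pairs. -/
def lambertEquiv : ℕ × ℕ ≃ ℕ × ℕ where
  toFun p := if p.1 ≤ p.2 then (2 * p.1, p.2 - p.1) else (2 * p.2 + 1, p.1 - p.2 - 1)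
  invFun p := if p.1 % 2 = 0 then (p.1 / 2, p.1 / 2 + p.2) else (p.1 / 2 + p.2 + 1, p.1 / 2)
  left_inv p := by
    obtain ⟨j, k⟩ := p
    dsimp only
    split_ifs <;> refine Prod.ext ?_ ?_ <;> simp_all <;> omega
  right_inv p := by
    obtain ⟨m, k⟩ := p
    dsimp only
    split_ifs <;> refine Prod.ext ?_ ?_ <;> simp_all <;> omega

lemma lambert_exponent (j k : ℕ) :
    ((lambertEquiv (j, k)).1 + 1) * ((lambertEquiv (j, k)).1 + 2) / 2
      + ((lambertEquiv (j, k)).1 + 1) * (lambertEquiv (j, k)).2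
      = (2 * j + 1) + (2 * j + 1) * k := by
  simp only [lambertEquiv, Equiv.coe_fn_mk]
  by_cases h : j ≤ k
  · obtain ⟨t, rfl⟩ : ∃ t, k = j + t := ⟨k - j, by omega⟩
    rw [if_pos h]
    dsimp only
    have h1 : j + t - j = t := by omega
    have h2 : (2 * j + 1) * (2 * j + 2) = ((2 * j + 1) * (j + 1)) * 2 := by ring
    rw [h1, h2, Nat.mul_div_cancel _ (by norm_num)]
    ring
  · obtain ⟨t, rfl⟩ : ∃ t, j = k + 1 + t := ⟨j - k - 1, by omega⟩
    rw [if_neg h]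
    dsimp only
    have h1 : k + 1 + t - k - 1 = t := by omega
    have h2 : (2 * k + 1 + 1) * (2 * k + 1 + 2) = ((k + 1) * (2 * k + 3)) * 2 := by ring
    rw [h1, h2, Nat.mul_div_cancel _ (by norm_num)]
    ring

/-- `∑_{j≥1} q^{2j-1}/(1-q^{2j-1}) = ∑_{j≥1} q^{j(j+1)/2}/(1-q^j)` for `|q| < 1`. -/
theorem lambert_odd_triangular_identity (q : ℂ) (hq : ‖q‖ < 1) :
    ∑' j : ℕ, q ^ (2 * j + 1) / (1 - q ^ (2 * j + 1)) =
      ∑' j : ℕ, q ^ ((j + 1) * (j + 2) / 2) / (1 - q ^ (j + 1)) := by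
  have hLb : ∀ p : ℕ × ℕ, p.1 + p.2 + 1 ≤ (2 * p.1 + 1) + (2 * p.1 + 1) * p.2 := by
    intro p; nlinarith [p.1.zero_le, p.2.zero_le]
  have hRb : ∀ p : ℕ × ℕ, p.1 + p.2 + 1 ≤ (p.1 + 1) * (p.1 + 2) / 2 + (p.1 + 1) * p.2 := by
    intro p
    have h1 : p.1 + 1 ≤ (p.1 + 1) * (p.1 + 2) / 2 :=
      (Nat.le_div_iff_mul_le (by norm_num)).mpr (by nlinarith)
    have h2 : p.2 ≤ (p.1 + 1) * p.2 := Nat.le_mul_of_pos_left _ (by omega)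
    omega
  have hLs : Summable fun p : ℕ × ℕ => q ^ ((2 * p.1 + 1) + (2 * p.1 + 1) * p.2) :=
    lambert_summable q hq _ hLb
  have hRs : Summable fun p : ℕ × ℕ => q ^ ((p.1 + 1) * (p.1 + 2) / 2 + (p.1 + 1) * p.2) :=
    lambert_summable q hq _ hRb
  calc ∑' j : ℕ, q ^ (2 * j + 1) / (1 - q ^ (2 * j + 1))
      = ∑' j : ℕ, ∑' k : ℕ, q ^ ((2 * j + 1) + (2 * j + 1) * k) :=
        tsum_congr fun j => lambert_expand q hq _ _ (by omega)
    _ = ∑' p : ℕ × ℕ, q ^ ((2 * p.1 + 1) + (2 * p.1 + 1) * p.2) := (hLs.tsum_prod).symm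
    _ = ∑' p : ℕ × ℕ, q ^ (((lambertEquiv p).1 + 1) * ((lambertEquiv p).1 + 2) / 2
          + ((lambertEquiv p).1 + 1) * (lambertEquiv p).2) := by
        refine tsum_congr fun p => ?_
        obtain ⟨j, k⟩ := p
        rw [lambert_exponent j k]
    _ = ∑' p : ℕ × ℕ, q ^ ((p.1 + 1) * (p.1 + 2) / 2 + (p.1 + 1) * p.2) :=
        lambertEquiv.tsum_eq fun p => q ^ ((p.1 + 1) * (p.1 + 2) / 2 + (p.1 + 1) * p.2)
    _ = ∑' j : ℕ, ∑' k : ℕ, q ^ ((j + 1) * (j + 2) / 2 + (j + 1) * k) := hRs.tsum_prod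
    _ = ∑' j : ℕ, q ^ ((j + 1) * (j + 2) / 2) / (1 - q ^ (j + 1)) :=
        tsum_congr fun j => (lambert_expand q hq _ _ (by omega)).symm
end

section
/- For |q| < 1 with 0 ≤ q, the following identity of double series holds: ∑_{n=2}^∞ q^{2n²}(q^{2n} + q^{4n} + ⋯ + q^{2n²-2n}) = ∑_{n=2}^∞ q^{(2n-1)²}(q^{2n-1} + q^{6n-3} + ⋯ + q^{4n²-8n+3}) + ∑_{n=2}^∞ q^{4n²}(q^{4n} + ⋯ + q^{4n²-4n}). -/
open Finset

namespace DSR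

abbrev TT := Σ n : ℕ, {j : ℕ // j ∈ Finset.range (n + 1)}

lemma TT_ext {x y : TT} (h1 : x.1 = y.1) (h2 : x.2.1 = y.2.1) : x = y := by
  rcases x with ⟨a, b, hb⟩
  rcases y with ⟨c, d, hd⟩
  simp only at h1 h2
  subst h1
  subst h2
  rfl

def sEven : Set TT := {x | (x.1 + x.2.1) % 2 = 0}

def e1 : TT ≃ ↥sEven where
  toFun x := ⟨⟨x.1 + x.2.1, ⟨x.1 - x.2.1, by
      have := x.2.2; simp only [Finset.mem_range] at *; omega⟩⟩, by
      have := x.2.2; simp only [Finset.mem_range] at this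
      simp only [sEven, Set.mem_setOf_eq]; omega⟩
  invFun y := ⟨(y.1.1 + y.1.2.1) / 2, ⟨(y.1.1 - y.1.2.1) / 2, by
      have h1 := y.1.2.2; have h2 := y.2
      simp only [Finset.mem_range] at *
      simp only [sEven, Set.mem_setOf_eq] at h2; omega⟩⟩
  left_inv x := by
    apply TT_ext <;>
    · have := x.2.2; simp only [Finset.mem_range] at this; simp; omega
  right_inv y := by
    apply Subtype.ext
    apply TT_ext <;>
    · have h1 := y.1.2.2; have h2 := y.2
      simp only [Finset.mem_range] at h1
      simp only [sEven, Set.mem_setOf_eq] at h2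
      simp; omega

def e2 : TT ≃ ↥sEvenᶜ where
  toFun x := ⟨⟨x.1 + x.2.1 + 1, ⟨x.1 - x.2.1, by
      have := x.2.2; simp only [Finset.mem_range] at *; omega⟩⟩, by
      have := x.2.2; simp only [Finset.mem_range] at this
      simp only [sEven, Set.mem_compl_iff, Set.mem_setOf_eq]; omega⟩
  invFun y := ⟨(y.1.1 + y.1.2.1 - 1) / 2, ⟨(y.1.1 - y.1.2.1) / 2, by
      have h1 := y.1.2.2; have h2 := y.2
      simp only [Finset.mem_range] at *
      simp only [sEven, Set.mem_compl_iff, Set.mem_setOf_eq] at h2; omega⟩⟩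
  left_inv x := by
    apply TT_ext <;>
    · have := x.2.2; simp only [Finset.mem_range] at this; simp; omega
  right_inv y := by
    apply Subtype.ext
    apply TT_ext <;>
    · have h1 := y.1.2.2; have h2 := y.2
      simp only [Finset.mem_range] at h1
      simp only [sEven, Set.mem_compl_iff, Set.mem_setOf_eq] at h2
      simp; omega

end DSR

open DSR in
set_option maxHeartbeats 2000000 in
/-- Identity (2.10) of the paper: for `0 ≤ q` with `|q| < 1`,
`∑_{n≥2} q^{2n²}(q^{2n} + ⋯ + q^{2n²-2n})
  = ∑_{n≥2} q^{(2n-1)²}(q^{2n-1} + q^{6n-3} + ⋯ + q^{4n²-8n+3})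
    + ∑_{n≥2} q^{4n²}(q^{4n} + ⋯ + q^{4n²-4n})`. -/
theorem double_series_rearrangement (q : ℝ) (hq : |q| < 1) (hq0 : 0 ≤ q) :
    ∑' n : ℕ, ∑ j ∈ Finset.range (n + 1), q ^ (2 * (n + 2) ^ 2 + 2 * (n + 2) * (j + 1)) =
      (∑' n : ℕ, ∑ i ∈ Finset.range (n + 1),
          q ^ ((2 * (n + 2) - 1) ^ 2 + (2 * (i + 1) - 1) * (2 * (n + 2) - 1))) +
        ∑' n : ℕ, ∑ i ∈ Finset.range (n + 1),
          q ^ (4 * (n + 2) ^ 2 + 4 * (n + 2) * (i + 1)) := by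
  have hq1 : q < 1 := by rwa [abs_of_nonneg hq0] at hq
  set F : TT → ℝ := fun x => q ^ (2 * (x.1 + 2) ^ 2 + 2 * (x.1 + 2) * (x.2.1 + 1)) with hF
  -- Summability of F
  have hbase : Summable (fun p : ℕ × ℕ => q ^ p.1 * q ^ p.2) :=
    (summable_geometric_of_lt_one hq0 hq1).mul_of_nonneg
      (summable_geometric_of_lt_one hq0 hq1)
      (fun n => pow_nonneg hq0 n) (fun n => pow_nonneg hq0 n)
  have hinj : Function.Injective (fun x : TT => (x.1, x.2.1)) := by
    intro x y h
    simp only [Prod.mk.injEq] at h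
    exact TT_ext h.1 h.2
  have hb : Summable (fun x : TT => q ^ x.1 * q ^ x.2.1) := hbase.comp_injective hinj
  have hFsumm : Summable F := by
    refine hb.of_nonneg_of_le (fun x => pow_nonneg hq0 _) (fun x => ?_)
    show q ^ _ ≤ q ^ x.1 * q ^ x.2.1
    rw [← pow_add]
    apply pow_le_pow_of_le_one hq0 hq1.le
    nlinarith [x.1.zero_le, x.2.1.zero_le]
  -- the restriction summabilities
  have hs1 : Summable (F ∘ ((↑) : ↥sEven → TT)) := hFsumm.subtype _
  have hs2 : Summable (F ∘ ((↑) : ↥sEvenᶜ → TT)) := hFsumm.subtype _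
  -- G1 and G2 via equivs
  have hG1 : Summable (fun x : TT => F (e1 x : TT)) := by
    exact (e1.summable_iff (f := fun y : ↥sEven => F y)).2 hs1
  have hG2 : Summable (fun x : TT => F (e2 x : TT)) := by
    exact (e2.summable_iff (f := fun y : ↥sEvenᶜ => F y)).2 hs2
  -- pointwise identifications
  have hptF : ∀ x : TT, F x = q ^ (2 * (x.1 + 2) ^ 2 + 2 * (x.1 + 2) * (x.2.1 + 1)) :=
    fun _ => rfl
  have hpt1 : ∀ x : TT,
      F (e1 x : TT) = q ^ ((2 * (x.1 + 2) - 1) ^ 2 + (2 * (x.2.1 + 1) - 1) * (2 * (x.1 + 2) - 1)) := by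
    rintro ⟨m, i, hi⟩
    simp only [Finset.mem_range] at hi
    have hi' : i ≤ m := by omega
    obtain ⟨d, rfl⟩ : ∃ d, m = i + d := ⟨m - i, by omega⟩
    show q ^ (2 * ((i + d) + i + 2) ^ 2 + 2 * ((i + d) + i + 2) * (((i + d) - i) + 1)) = _
    congr 1
    have : (i + d) - i = d := by omega
    rw [this]
    have h1 : 2 * (i + d + 2) - 1 = 2 * (i + d) + 3 := by omega
    have h2 : 2 * (i + 1) - 1 = 2 * i + 1 := by omega
    rw [h1, h2]
    ring
  have hpt2 : ∀ x : TT,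
      F (e2 x : TT) = q ^ (4 * (x.1 + 2) ^ 2 + 4 * (x.1 + 2) * (x.2.1 + 1)) := by
    rintro ⟨m, i, hi⟩
    simp only [Finset.mem_range] at hi
    obtain ⟨d, rfl⟩ : ∃ d, m = i + d := ⟨m - i, by omega⟩
    show q ^ (2 * ((i + d) + i + 1 + 2) ^ 2 + 2 * ((i + d) + i + 1 + 2) * (((i + d) - i) + 1)) = _
    congr 1
    have : (i + d) - i = d := by omega
    rw [this]
    ring
  -- rewrite each iterated sum as a tsum over TT
  have conv : ∀ g : ℕ → ℕ → ℝ, Summable (fun x : TT => g x.1 x.2.1) →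
      ∑' x : TT, g x.1 x.2.1 = ∑' n : ℕ, ∑ j ∈ Finset.range (n + 1), g n j := by
    intro g hg
    rw [Summable.tsum_sigma hg]
    exact tsum_congr fun n => Finset.tsum_subtype (Finset.range (n + 1)) (g n)
  have hL : ∑' x : TT, F x
      = ∑' n : ℕ, ∑ j ∈ Finset.range (n + 1), q ^ (2 * (n + 2) ^ 2 + 2 * (n + 2) * (j + 1)) :=
    conv (fun n j => q ^ (2 * (n + 2) ^ 2 + 2 * (n + 2) * (j + 1))) hFsumm
  have hR1 : ∑' x : TT, F (e1 x : TT)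
      = ∑' n : ℕ, ∑ i ∈ Finset.range (n + 1),
          q ^ ((2 * (n + 2) - 1) ^ 2 + (2 * (i + 1) - 1) * (2 * (n + 2) - 1)) := by
    rw [tsum_congr hpt1]
    refine conv (fun n i => q ^ ((2 * (n + 2) - 1) ^ 2 + (2 * (i + 1) - 1) * (2 * (n + 2) - 1))) ?_
    have := hG1
    rwa [funext hpt1] at this
  have hR2 : ∑' x : TT, F (e2 x : TT)
      = ∑' n : ℕ, ∑ i ∈ Finset.range (n + 1),
          q ^ (4 * (n + 2) ^ 2 + 4 * (n + 2) * (i + 1)) := by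
    rw [tsum_congr hpt2]
    refine conv (fun n i => q ^ (4 * (n + 2) ^ 2 + 4 * (n + 2) * (i + 1))) ?_
    have := hG2
    rwa [funext hpt2] at this
  have hE1 : ∑' x : TT, F (e1 x : TT) = ∑' y : ↥sEven, F (y : TT) :=
    e1.tsum_eq (fun y : ↥sEven => F (y : TT))
  have hE2 : ∑' x : TT, F (e2 x : TT) = ∑' y : ↥sEvenᶜ, F (y : TT) :=
    e2.tsum_eq (fun y : ↥sEvenᶜ => F (y : TT))
  rw [← hL, ← hR1, ← hR2, hE1, hE2]
  exact (Summable.tsum_add_tsum_compl hs1 hs2).symm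
end

section
/- For positive integers a, b, c with b < c, the power series expansion of (−q;q)_∞/(q;q)_∞ · q^a (1−q^b)(1−q^c) has nonnegative coefficients. -/
open PowerSeries

/-- The infinite product `∏_{k≥0} f k` of power series whose factors satisfy
`f k ≡ 1 (mod X^(k+1))`, defined coefficientwise via partial products. -/
noncomputable def infProd (f : ℕ → PowerSeries ℚ) : PowerSeries ℚ :=
  PowerSeries.mk fun m => PowerSeries.coeff m (∏ k ∈ Finset.range (m + 1), f k)

/-- `(q;q)_∞`. -/
noncomputable def Pq : PowerSeries ℚ := infProd fun k => 1 - X ^ (k + 1)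

/-- `(-q;q)_∞`. -/
noncomputable def Nq : PowerSeries ℚ := infProd fun k => 1 + X ^ (k + 1)

namespace OverPf

/-- geometric series for `(1-X^j)⁻¹` -/
noncomputable def G (j : ℕ) : PowerSeries ℚ := PowerSeries.mk fun n => if j ∣ n then 1 else 0

/-- tail condition: `f k ≡ 1 (mod X^(k+1))` -/
def Tail (f : ℕ → PowerSeries ℚ) : Prop := ∀ k, ∀ j ≤ k, coeff j (f k - 1) = 0

lemma coeff_mul_eq_zero {P r : PowerSeries ℚ} {m : ℕ} (hr : ∀ j ≤ m, coeff j r = 0) :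
    coeff m (P * r) = 0 := by
  rw [PowerSeries.coeff_mul]
  apply Finset.sum_eq_zero
  intro x hx
  rw [Finset.HasAntidiagonal.mem_antidiagonal] at hx
  rw [hr x.2 (by omega), mul_zero]

lemma coeff_prod_stable {f : ℕ → PowerSeries ℚ} (hf : Tail f) (m N : ℕ) (h : m < N) :
    coeff m (∏ k ∈ Finset.range N, f k) = coeff m (∏ k ∈ Finset.range (m + 1), f k) := by
  induction N, h using Nat.le_induction with
  | base => rfl
  | succ N hN ih =>
    rw [Finset.prod_range_succ]
    have key : (∏ k ∈ Finset.range N, f k) * f N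
        = (∏ k ∈ Finset.range N, f k) + (∏ k ∈ Finset.range N, f k) * (f N - 1) := by ring
    rw [key, map_add, coeff_mul_eq_zero (fun j hj => hf N j (by omega)), add_zero, ih]

lemma coeff_infProd {f : ℕ → PowerSeries ℚ} (hf : Tail f) (m N : ℕ) (h : m < N) :
    coeff m (infProd f) = coeff m (∏ k ∈ Finset.range N, f k) := by
  rw [infProd, coeff_mk, coeff_prod_stable hf m N h]

lemma infProd_mul {f g : ℕ → PowerSeries ℚ} (hf : Tail f) (hg : Tail g) :
    infProd f * infProd g = infProd (fun k => f k * g k) := by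
  ext m
  rw [PowerSeries.coeff_mul]
  have : ∀ x ∈ Finset.HasAntidiagonal.antidiagonal m,
      coeff x.1 (infProd f) * coeff x.2 (infProd g)
      = coeff x.1 (∏ k ∈ Finset.range (m+1), f k) * coeff x.2 (∏ k ∈ Finset.range (m+1), g k) := by
    intro x hx
    rw [Finset.HasAntidiagonal.mem_antidiagonal] at hx
    rw [coeff_infProd hf x.1 (m+1) (by omega), coeff_infProd hg x.2 (m+1) (by omega)]
  rw [Finset.sum_congr rfl this, ← PowerSeries.coeff_mul, ← Finset.prod_mul_distrib]
  rw [infProd, coeff_mk]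

lemma infProd_one : infProd (fun _ => (1 : PowerSeries ℚ)) = 1 := by
  ext m
  rw [infProd, coeff_mk, Finset.prod_const_one]

lemma tail_mul {f g : ℕ → PowerSeries ℚ} (hf : Tail f) (hg : Tail g) :
    Tail (fun k => f k * g k) := by
  intro k j hj
  have key : f k * g k - 1 = g k * (f k - 1) + (g k - 1) := by ring
  rw [key, map_add, coeff_mul_eq_zero (fun j' hj' => hf k j' (by omega)), hg k j hj, add_zero]

lemma cc_one_sub_X_pow (j : ℕ) (hj : 0 < j) :
    constantCoeff (1 - X ^ j : PowerSeries ℚ) = 1 := by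
  rw [map_sub, map_one, map_pow, constantCoeff_X, zero_pow hj.ne', sub_zero]

lemma geom_mul (j : ℕ) (hj : 0 < j) : (1 - X ^ j : PowerSeries ℚ) * G j = 1 := by
  ext m
  have : (1 - X ^ j : PowerSeries ℚ) * G j = G j - G j * X ^ j := by ring
  rw [this, map_sub, PowerSeries.coeff_mul_X_pow', G, coeff_mk, PowerSeries.coeff_one]
  rcases Nat.eq_zero_or_pos m with hm | hm
  · subst hm
    simp [Nat.not_le.mpr hj]
  · by_cases hle : j ≤ m
    · rw [if_pos hle, coeff_mk]
      have hd : j ∣ m ↔ j ∣ m - j := by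
        constructor
        · intro h; exact (Nat.dvd_sub h dvd_rfl)
        · intro h; have := Nat.dvd_add h dvd_rfl; rwa [Nat.sub_add_cancel hle] at this
      by_cases hdm : j ∣ m
      · rw [if_pos hdm, if_pos (hd.mp hdm), if_neg hm.ne', sub_self]
      · rw [if_neg hdm, if_neg (fun h => hdm (hd.mpr h)), if_neg hm.ne', sub_self]
    · rw [if_neg hle, if_neg (fun h : j ∣ m => hle (Nat.le_of_dvd hm h)), if_neg hm.ne', sub_zero]

lemma inv_one_sub_X_pow (j : ℕ) (hj : 0 < j) : (1 - X ^ j : PowerSeries ℚ)⁻¹ = G j := by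
  symm
  rw [PowerSeries.eq_inv_iff_mul_eq_one (by rw [cc_one_sub_X_pow j hj]; norm_num), mul_comm]
  exact geom_mul j hj

lemma coeff_G_nonneg (j m : ℕ) : 0 ≤ coeff m (G j) := by
  rw [G, coeff_mk]; split <;> norm_num

lemma tail_p : Tail (fun k => (1 - X ^ (k + 1) : PowerSeries ℚ)) := by
  intro k j hj
  have : (1 - X ^ (k+1) : PowerSeries ℚ) - 1 = -(X ^ (k+1)) := by ring
  rw [this, map_neg, PowerSeries.coeff_X_pow, if_neg (by omega), neg_zero]

lemma tail_n : Tail (fun k => (1 + X ^ (k + 1) : PowerSeries ℚ)) := by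
  intro k j hj
  have : (1 + X ^ (k+1) : PowerSeries ℚ) - 1 = X ^ (k+1) := by ring
  rw [this, PowerSeries.coeff_X_pow, if_neg (by omega)]

lemma tail_pinv : Tail (fun k => (1 - X ^ (k + 1) : PowerSeries ℚ)⁻¹) := by
  intro k j hj
  simp only []
  rw [inv_one_sub_X_pow (k+1) k.succ_pos, map_sub, G, coeff_mk, PowerSeries.coeff_one]
  rcases Nat.eq_zero_or_pos j with h0 | h0
  · subst h0; simp
  · rw [if_neg (fun h => absurd (Nat.le_of_dvd h0 h) (by omega)), if_neg h0.ne', sub_zero]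


/-- product at positions b, c -/
noncomputable def E (b c : ℕ) : ℕ → PowerSeries ℚ :=
  fun k => if k + 1 = b ∨ k + 1 = c then 1 - X ^ (k + 1) else 1

lemma tail_E (b c : ℕ) : Tail (E b c) := by
  intro k j hj
  rw [E]
  split
  · exact tail_p k j hj
  · simp

lemma prod_E (b c N : ℕ) (hb : 0 < b) (hbc : b < c) (hN : c ≤ N) :
    ∏ k ∈ Finset.range N, E b c k = (1 - X ^ b) * (1 - X ^ c) := by
  have hsub : ({b - 1, c - 1} : Finset ℕ) ⊆ Finset.range N := by
    intro x hx
    simp only [Finset.mem_insert, Finset.mem_singleton] at hx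
    rw [Finset.mem_range]; omega
  rw [← Finset.prod_subset hsub (fun x _ hx => by
    simp only [Finset.mem_insert, Finset.mem_singleton, not_or] at hx
    rw [E, if_neg (by omega)])]
  rw [Finset.prod_pair (by omega : b - 1 ≠ c - 1), E, E,
    if_pos (by omega : b - 1 + 1 = b ∨ b - 1 + 1 = c),
    if_pos (by omega : c - 1 + 1 = b ∨ c - 1 + 1 = c)]
  rw [(by omega : b - 1 + 1 = b), (by omega : c - 1 + 1 = c)]

lemma infProd_E (b c : ℕ) (hb : 0 < b) (hbc : b < c) :
    infProd (E b c) = (1 - X ^ b) * (1 - X ^ c) := by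
  ext m
  rw [coeff_infProd (tail_E b c) m (max (m + 1) c) (by omega),
    prod_E b c _ hb hbc (le_max_right _ _)]

lemma Pq_inv : Pq⁻¹ = infProd (fun k => (1 - X ^ (k + 1) : PowerSeries ℚ)⁻¹) := by
  symm
  rw [PowerSeries.eq_inv_iff_mul_eq_one]
  · have heq : (fun k => (1 - X ^ (k + 1) : PowerSeries ℚ)⁻¹ * (1 - X ^ (k + 1))) = fun _ => 1 := by
      funext k
      exact PowerSeries.inv_mul_cancel _ (by rw [cc_one_sub_X_pow (k+1) k.succ_pos]; norm_num)
    rw [Pq, infProd_mul tail_pinv tail_p, heq, infProd_one]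
  · rw [← PowerSeries.coeff_zero_eq_constantCoeff_apply, Pq,
      coeff_infProd tail_p 0 1 one_pos, Finset.prod_range_one, map_sub,
      PowerSeries.coeff_one, PowerSeries.coeff_X_pow]
    norm_num

lemma nonneg_mul {f g : PowerSeries ℚ} (hf : ∀ m, 0 ≤ coeff m f) (hg : ∀ m, 0 ≤ coeff m g) :
    ∀ m, 0 ≤ coeff m (f * g) := by
  intro m
  rw [PowerSeries.coeff_mul]
  exact Finset.sum_nonneg fun x _ => mul_nonneg (hf x.1) (hg x.2)

lemma nonneg_h (b c k : ℕ) (hb : 0 < b) (hbc : b < c) :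
    ∀ m, 0 ≤ coeff m ((1 + X ^ (k + 1)) * (1 - X ^ (k + 1) : PowerSeries ℚ)⁻¹ * E b c k) := by
  have hn : ∀ m, 0 ≤ coeff m (1 + X ^ (k + 1) : PowerSeries ℚ) := by
    intro m
    rw [map_add, PowerSeries.coeff_one, PowerSeries.coeff_X_pow]
    split <;> split <;> norm_num
  by_cases hk : k + 1 = b ∨ k + 1 = c
  · have : (1 + X ^ (k + 1)) * (1 - X ^ (k + 1) : PowerSeries ℚ)⁻¹ * E b c k
        = 1 + X ^ (k + 1) := by
      rw [E, if_pos hk, mul_assoc,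
        PowerSeries.inv_mul_cancel _ (by rw [cc_one_sub_X_pow (k+1) k.succ_pos]; norm_num),
        mul_one]
    rw [this]; exact hn
  · rw [E, if_neg hk, mul_one, inv_one_sub_X_pow (k+1) k.succ_pos]
    exact nonneg_mul hn (coeff_G_nonneg (k+1))

end OverPf

/-- For positive integers `a, b, c` with `b < c`, the power series
`(-q;q)_∞/(q;q)_∞ · q^a (1-q^b)(1-q^c)` has nonnegative coefficients. -/
theorem nonneg_coeff_overpartition_product (a b c : ℕ) (ha : 0 < a) (hb : 0 < b)
    (hbc : b < c) (n : ℕ) :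
    0 ≤ PowerSeries.coeff n (Nq * Pq⁻¹ * (X ^ a * (1 - X ^ b) * (1 - X ^ c))) := by
  open OverPf in
  have key : Nq * Pq⁻¹ * (X ^ a * (1 - X ^ b) * (1 - X ^ c))
      = infProd (fun k => (1 + X ^ (k + 1)) * (1 - X ^ (k + 1) : PowerSeries ℚ)⁻¹ * E b c k)
        * X ^ a := by
    rw [Pq_inv]
    have step : Nq * infProd (fun k => (1 - X ^ (k + 1) : PowerSeries ℚ)⁻¹)
        * (X ^ a * (1 - X ^ b) * (1 - X ^ c))
        = Nq * infProd (fun k => (1 - X ^ (k + 1) : PowerSeries ℚ)⁻¹)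
          * ((1 - X ^ b) * (1 - X ^ c)) * X ^ a := by ring
    rw [step, ← infProd_E b c hb hbc, Nq, infProd_mul tail_n tail_pinv,
      infProd_mul (tail_mul tail_n tail_pinv) (tail_E b c)]
  rw [key, PowerSeries.coeff_mul_X_pow']
  split
  · next h =>
    rw [OverPf.coeff_infProd (tail_mul (tail_mul tail_n tail_pinv) (tail_E b c)) (n - a) (n - a + 1) (by omega)]
    have : ∀ k ∈ Finset.range (n - a + 1), (fun k =>
        (1 + X ^ (k + 1)) * (1 - X ^ (k + 1) : PowerSeries ℚ)⁻¹ * E b c k) k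
        = (1 + X ^ (k + 1)) * (1 - X ^ (k + 1) : PowerSeries ℚ)⁻¹ * E b c k := fun _ _ => rfl
    refine Finset.prod_induction _ (fun f => ∀ m, 0 ≤ coeff m f)
      (fun f g hf hg => nonneg_mul hf hg) (fun m => by rw [PowerSeries.coeff_one]; split <;> norm_num)
      (fun k _ => nonneg_h b c k hb hbc) _
  · exact le_refl 0
end

section
/- For all n ≥ 1, the coefficient of q^n in (−q;q)_∞/(2(q;q)_∞) − 1/2 − ( (−q;q²)_∞/(q;q²)_∞ ) · ( (−q²;q²)_∞/(2(q²;q²)_∞) − 1/2 ) equals the coefficient of q^n in (−q;q²)_∞/(2(q;q²)_∞) − 1/2, and this coefficient is positive. -/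
open PowerSeries

/-- `(q;q²)_∞`. -/
noncomputable def PqOdd : PowerSeries ℚ := infProd fun k => 1 - X ^ (2 * k + 1)

/-- `(-q;q²)_∞`. -/
noncomputable def NqOdd : PowerSeries ℚ := infProd fun k => 1 + X ^ (2 * k + 1)

/-- `(q²;q²)_∞`. -/
noncomputable def PqEven : PowerSeries ℚ := infProd fun k => 1 - X ^ (2 * k + 2)

/-- `(-q²;q²)_∞`. -/
noncomputable def NqEven : PowerSeries ℚ := infProd fun k => 1 + X ^ (2 * k + 2)

namespace Aux

/-- multiplying by something ≡ 1 mod high powers doesn't change low coefficients -/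
lemma coeff_mul_one_add (g h : PowerSeries ℚ) (m : ℕ) (hh : ∀ j ≤ m, (coeff j) h = 0) :
    coeff m (g * (1 + h)) = coeff m g := by
  rw [mul_add, mul_one, map_add, coeff_mul]
  have : ∀ p ∈ Finset.HasAntidiagonal.antidiagonal m, coeff p.1 g * coeff p.2 h = 0 := by
    rintro ⟨i, j⟩ hp
    rw [Finset.HasAntidiagonal.mem_antidiagonal] at hp
    rw [hh j (by omega), mul_zero]
  rw [Finset.sum_eq_zero this, add_zero]

/-- a "tame" factor sequence: f k ≡ 1 (mod X^(k+1)) -/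
def Tame (f : ℕ → PowerSeries ℚ) : Prop := ∀ k, ∀ j ≤ k, coeff j (f k - 1) = 0

lemma stable {f : ℕ → PowerSeries ℚ} (hf : Tame f) (m : ℕ) :
    ∀ N, m < N →
      coeff m (∏ k ∈ Finset.range N, f k) =
        coeff m (∏ k ∈ Finset.range (m + 1), f k) := by
  intro N hN
  induction N, hN using Nat.le_induction with
  | base => rfl
  | succ N hN ih =>
    rw [Finset.prod_range_succ]
    have : f N = 1 + (f N - 1) := by ring_nf
    rw [this, coeff_mul_one_add _ _ _ (fun j hj => hf N j (by omega)), ih]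

lemma coeff_infProd {f : ℕ → PowerSeries ℚ} (m : ℕ) :
    coeff m (infProd f) = coeff m (∏ k ∈ Finset.range (m + 1), f k) := by
  simp [infProd, coeff_mk]

lemma coeff_infProd_of_lt {f : ℕ → PowerSeries ℚ} (hf : Tame f) {m N : ℕ} (h : m < N) :
    coeff m (infProd f) = coeff m (∏ k ∈ Finset.range N, f k) := by
  rw [coeff_infProd, stable hf m N h]

lemma coeff_infProd_mul {f g : ℕ → PowerSeries ℚ} (hf : Tame f) (hg : Tame g)
    {m N : ℕ} (h : m < N) :
    coeff m (infProd f * infProd g) =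
      coeff m ((∏ k ∈ Finset.range N, f k) * ∏ k ∈ Finset.range N, g k) := by
  rw [coeff_mul, coeff_mul]
  refine Finset.sum_congr rfl ?_
  rintro ⟨i, j⟩ hp
  rw [Finset.HasAntidiagonal.mem_antidiagonal] at hp
  rw [coeff_infProd_of_lt hf (show i < N by omega), coeff_infProd_of_lt hg (show j < N by omega)]

lemma tame_add (E : ℕ → ℕ) (hE : ∀ k, k < E k) : Tame (fun k => 1 + X ^ E k) := by
  intro k j hj
  simp only [add_sub_cancel_left, coeff_X_pow]
  have := hE k
  rw [if_neg (by omega)]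

lemma tame_sub (E : ℕ → ℕ) (hE : ∀ k, k < E k) : Tame (fun k => 1 - X ^ E k) := by
  intro k j hj
  have : (1 - X ^ E k - 1 : PowerSeries ℚ) = -(X ^ E k) := by ring
  rw [this, map_neg, coeff_X_pow]
  have := hE k
  rw [if_neg (by omega), neg_zero]

lemma split_add (N : ℕ) :
    (∏ k ∈ Finset.range N, (1 + X ^ (2 * k + 1) : PowerSeries ℚ)) *
        ∏ k ∈ Finset.range N, (1 + X ^ (2 * k + 2) : PowerSeries ℚ) =
      ∏ k ∈ Finset.range (2 * N), (1 + X ^ (k + 1) : PowerSeries ℚ) := by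
  induction N with
  | zero => simp
  | succ N ih =>
    rw [Finset.prod_range_succ, Finset.prod_range_succ,
      show 2 * (N + 1) = (2 * N + 1) + 1 by ring, Finset.prod_range_succ,
      Finset.prod_range_succ, ← ih, show 2 * N + 1 + 1 = 2 * N + 2 by ring]
    ring

lemma split_sub (N : ℕ) :
    (∏ k ∈ Finset.range N, (1 - X ^ (2 * k + 1) : PowerSeries ℚ)) *
        ∏ k ∈ Finset.range N, (1 - X ^ (2 * k + 2) : PowerSeries ℚ) =
      ∏ k ∈ Finset.range (2 * N), (1 - X ^ (k + 1) : PowerSeries ℚ) := by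
  induction N with
  | zero => simp
  | succ N ih =>
    rw [Finset.prod_range_succ, Finset.prod_range_succ,
      show 2 * (N + 1) = (2 * N + 1) + 1 by ring, Finset.prod_range_succ,
      Finset.prod_range_succ, ← ih, show 2 * N + 1 + 1 = 2 * N + 2 by ring]
    ring

lemma Nq_eq : Nq = NqOdd * NqEven := by
  ext m
  rw [Nq, NqOdd, NqEven,
    coeff_infProd_mul (tame_add _ (fun k => by omega))
      (tame_add _ (fun k => by omega)) (show m < m + 1 by omega),
    coeff_infProd_of_lt (tame_add (fun k => k + 1) (fun k => Nat.lt_succ_self k))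
      (show m < 2 * (m + 1) by omega), split_add]

lemma Pq_eq : Pq = PqOdd * PqEven := by
  ext m
  rw [Pq, PqOdd, PqEven,
    coeff_infProd_mul (tame_sub _ (fun k => by omega))
      (tame_sub _ (fun k => by omega)) (show m < m + 1 by omega),
    coeff_infProd_of_lt (tame_sub (fun k => k + 1) (fun k => Nat.lt_succ_self k))
      (show m < 2 * (m + 1) by omega), split_sub]

lemma Nq_mul_Pq : Nq * Pq = PqEven := by
  ext m
  rw [Nq, Pq, PqEven,
    coeff_infProd_mul (tame_add _ (fun k => by omega)) (tame_sub _ (fun k => by omega))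
      (show m < m + 1 by omega),
    coeff_infProd]
  rw [← Finset.prod_mul_distrib]
  congr 1
  refine Finset.prod_congr rfl fun k _ => ?_
  have : (X : PowerSeries ℚ) ^ (2 * k + 2) = X ^ (k + 1) * X ^ (k + 1) := by
    rw [← pow_add]; congr 1; ring
  rw [this]; ring

lemma constCoeff_Nq : constantCoeff Nq = 1 := by
  rw [← PowerSeries.coeff_zero_eq_constantCoeff_apply, Nq, coeff_infProd]
  simp

lemma constCoeff_of_infProd_add (E : ℕ → ℕ) (hE : ∀ k, 0 < E k) :
    constantCoeff (infProd fun k => 1 + X ^ E k) = 1 := by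
  rw [← PowerSeries.coeff_zero_eq_constantCoeff_apply, coeff_infProd]
  have h0 := hE 0
  simp [coeff_X_pow, h0.ne']

lemma constCoeff_of_infProd_sub (E : ℕ → ℕ) (hE : ∀ k, 0 < E k) :
    constantCoeff (infProd fun k => 1 - X ^ E k) = 1 := by
  rw [← PowerSeries.coeff_zero_eq_constantCoeff_apply, coeff_infProd]
  have h0 := hE 0
  simp [coeff_X_pow, h0.ne']

lemma constCoeff_PqOdd : constantCoeff PqOdd = 1 :=
  constCoeff_of_infProd_sub _ (fun k => by omega)

lemma constCoeff_PqEven : constantCoeff PqEven = 1 :=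
  constCoeff_of_infProd_sub _ (fun k => by omega)

lemma PqEven_ne_zero : PqEven ≠ 0 := by
  intro h
  have := constCoeff_PqEven
  rw [h, map_zero] at this
  exact zero_ne_one this

lemma Nq_mul_PqOdd : Nq * PqOdd = 1 := by
  have h1 : Nq * PqOdd * PqEven = 1 * PqEven := by
    rw [mul_assoc, ← Pq_eq, Nq_mul_Pq, one_mul]
  exact mul_right_cancel₀ PqEven_ne_zero h1

lemma PqOdd_inv : PqOdd⁻¹ = Nq := by
  rw [PowerSeries.inv_eq_iff_mul_eq_one (by rw [constCoeff_PqOdd]; exact one_ne_zero)]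
  exact Nq_mul_PqOdd

/-- nonneg coefficients of partial products of (1 + X^E) -/
lemma nonneg_partial (E : ℕ → ℕ) (N : ℕ) :
    ∀ m, 0 ≤ coeff m (∏ k ∈ Finset.range N, (1 + X ^ E k) : PowerSeries ℚ) := by
  induction N with
  | zero => intro m; rw [Finset.prod_range_zero, coeff_one]; split <;> norm_num
  | succ N ih =>
    intro m
    rw [Finset.prod_range_succ, mul_add, mul_one, map_add, coeff_mul_X_pow']
    have h1 := ih m
    split
    · have h2 := ih (m - E N); linarith
    · linarith

lemma pos_partial : ∀ N m, m ≤ N →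
    0 < coeff m (∏ k ∈ Finset.range N, (1 + X ^ (k + 1) : PowerSeries ℚ)) := by
  intro N
  induction N with
  | zero =>
    intro m hm
    interval_cases m
    simp
  | succ N ih =>
    intro m hm
    rw [Finset.prod_range_succ, mul_add, mul_one, map_add, coeff_mul_X_pow']
    rcases Nat.lt_or_ge m (N + 1) with h | h
    · have h1 := ih m (by omega)
      have h2 : 0 ≤ (if N + 1 ≤ m then coeff (m - (N + 1))
          (∏ k ∈ Finset.range N, (1 + X ^ (k + 1) : PowerSeries ℚ)) else 0) := by
        split
        · exact nonneg_partial (fun k => k + 1) N _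
        · exact le_refl 0
      linarith
    · have hm' : m = N + 1 := by omega
      subst hm'
      rw [if_pos (le_refl _), Nat.sub_self]
      have h1 : 0 < coeff 0 (∏ k ∈ Finset.range N, (1 + X ^ (k + 1) : PowerSeries ℚ)) := by
        rcases Nat.eq_zero_or_pos N with h0 | h0
        · subst h0; simp
        · exact ih 0 (by omega)
      have h2 := nonneg_partial (fun k => k + 1) N (N + 1)
      linarith

lemma nonneg_Nq (m : ℕ) : 0 ≤ coeff m Nq := by
  rw [Nq, coeff_infProd]; exact nonneg_partial (fun k => k + 1) (m + 1) m

lemma nonneg_NqOdd (m : ℕ) : 0 ≤ coeff m NqOdd := by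
  rw [NqOdd, coeff_infProd]; exact nonneg_partial (fun k => 2 * k + 1) (m + 1) m

lemma pos_Nq (m : ℕ) : 0 < coeff m Nq := by
  rw [Nq, coeff_infProd]; exact pos_partial (m + 1) m (by omega)

lemma constCoeff_NqOdd : coeff 0 NqOdd = 1 := by
  rw [NqOdd, coeff_infProd]
  simp

lemma pos_NqOdd_mul_Nq (n : ℕ) : 0 < coeff n (NqOdd * Nq) := by
  rw [coeff_mul]
  apply Finset.sum_pos'
  · rintro ⟨i, j⟩ _
    exact mul_nonneg (nonneg_NqOdd i) (nonneg_Nq j)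
  · refine ⟨(0, n), ?_, ?_⟩
    · rw [Finset.HasAntidiagonal.mem_antidiagonal]; omega
    · rw [constCoeff_NqOdd, one_mul]
      exact pos_Nq n

end Aux

/-- For `n ≥ 1`, the coefficient of `q^n` in
`(-q;q)_∞/(2(q;q)_∞) - 1/2 - ((-q;q²)_∞/(q;q²)_∞)((-q²;q²)_∞/(2(q²;q²)_∞) - 1/2)`
equals that of `(-q;q²)_∞/(2(q;q²)_∞) - 1/2`, and this coefficient is positive. -/
theorem A1_sub_A4_coeff (n : ℕ) (hn : 1 ≤ n) :
    PowerSeries.coeff n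
        (C (1 / 2 : ℚ) * Nq * Pq⁻¹ - C (1 / 2 : ℚ) -
          NqOdd * PqOdd⁻¹ * (C (1 / 2 : ℚ) * NqEven * PqEven⁻¹ - C (1 / 2 : ℚ))) =
      PowerSeries.coeff n (C (1 / 2 : ℚ) * NqOdd * PqOdd⁻¹ - C (1 / 2 : ℚ)) ∧
      0 < PowerSeries.coeff n (C (1 / 2 : ℚ) * NqOdd * PqOdd⁻¹ - C (1 / 2 : ℚ)) := by
  constructor
  · congr 1
    rw [Aux.Nq_eq, Aux.Pq_eq, PowerSeries.mul_inv_rev]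
    ring
  · rw [Aux.PqOdd_inv]
    have hC : coeff n (C (1 / 2 : ℚ)) = 0 := by
      rw [PowerSeries.coeff_C, if_neg (by omega)]
    rw [map_sub, hC, sub_zero, mul_assoc, PowerSeries.coeff_C_mul]
    have := Aux.pos_NqOdd_mul_Nq n
    linarith
end

section
/- For a fixed integer k ≥ 1 and |q| < 1, with f_k(q) = ∑_{n=1}^∞ (−1)^{n+1} q^{n(n+1)/2 + n(k−1)}, the identity f_{2k−1}(q) + f_{2k}(q) − 2 f_k(q²) = ∑_{n=1}^∞ [ q^{2n²−5n+4nk−2k+2}(1−q^{2n²−n})(1−q^{4n+2k−2}) − q^{2n²−3n+4nk}(1−q^{2n²+n})(1−q^{4n+2k}) ] holds. -/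
/-- `f_k(q) = ∑_{n≥1} (-1)^{n+1} q^{n(n+1)/2 + n(k-1)}`. -/
noncomputable def fk (k : ℕ) (q : ℂ) : ℂ :=
  ∑' n : ℕ, (-1) ^ n * q ^ ((n + 1) * (n + 2) / 2 + (n + 1) * (k - 1))

private lemma summable_pow_aux (q : ℂ) (hq : ‖q‖ < 1) (e : ℕ → ℕ) (he : ∀ n, n ≤ e n) :
    Summable fun n => q ^ e n := by
  apply Summable.of_norm_bounded (summable_geometric_of_lt_one (norm_nonneg q) hq)
  intro n
  rw [norm_pow]
  exact pow_le_pow_of_le_one (norm_nonneg q) hq.le (he n)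

private lemma tri_even (m : ℕ) : (2*m+1)*(2*m+2)/2 = 2*m^2+3*m+1 := by
  rw [show (2*m+1)*(2*m+2) = (2*m^2+3*m+1)*2 by ring, Nat.mul_div_cancel _ two_pos]

private lemma tri_odd (m : ℕ) : (2*m+2)*(2*m+3)/2 = 2*m^2+5*m+3 := by
  rw [show (2*m+2)*(2*m+3) = (2*m^2+5*m+3)*2 by ring, Nat.mul_div_cancel _ two_pos]

/-- For `k ≥ 1` and `|q| < 1`:
`f_{2k-1}(q) + f_{2k}(q) - 2f_k(q²)
  = ∑_{n≥1} [q^{2n²-5n+4nk-2k+2}(1-q^{2n²-n})(1-q^{4n+2k-2})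
             - q^{2n²-3n+4nk}(1-q^{2n²+n})(1-q^{4n+2k})]`. -/
theorem fk_combination (k : ℕ) (hk : 1 ≤ k) (q : ℂ) (hq : ‖q‖ < 1) :
    fk (2 * k - 1) q + fk (2 * k) q - 2 * fk k (q ^ 2) =
      ∑' m : ℕ,
        (q ^ ((2 * (m + 1) ^ 2 + 4 * (m + 1) * k + 2) - (5 * (m + 1) + 2 * k)) *
            (1 - q ^ (2 * (m + 1) ^ 2 - (m + 1))) * (1 - q ^ (4 * (m + 1) + 2 * k - 2)) -
          q ^ ((2 * (m + 1) ^ 2 + 4 * (m + 1) * k) - 3 * (m + 1)) *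
            (1 - q ^ (2 * (m + 1) ^ 2 + (m + 1))) * (1 - q ^ (4 * (m + 1) + 2 * k))) := by
  obtain ⟨j, rfl⟩ : ∃ j, k = j + 1 := ⟨k - 1, by omega⟩
  -- the seven/eight basic power series
  set t1 : ℕ → ℕ := fun m => 2*m^2+3*m+1+4*(m*j)+2*j with ht1
  set t2 : ℕ → ℕ := fun m => 4*m^2+6*m+2+4*(m*j)+2*j with ht2
  set t3 : ℕ → ℕ := fun m => 2*m^2+7*m+5+4*(m*j)+4*j with ht3
  set t4 : ℕ → ℕ := fun m => 4*m^2+10*m+6+4*(m*j)+4*j with ht4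
  set t5 : ℕ → ℕ := fun m => 2*m^2+5*m+3+4*(m*j)+4*j with ht5
  set t7 : ℕ → ℕ := fun m => 2*m^2+9*m+9+4*(m*j)+6*j with ht7
  set t8 : ℕ → ℕ := fun m => 4*m^2+14*m+12+4*(m*j)+6*j with ht8
  set u : ℕ → ℕ := fun m => 2*m^2+5*m+2+4*(m*j)+2*j with hu
  have Hs : ∀ e : ℕ → ℕ, (∀ n, n ≤ e n) → Summable fun n => q ^ e n :=
    summable_pow_aux q hq
  have s1 : Summable fun m => q ^ t1 m := Hs _ fun n => by simp only [ht1]; nlinarith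
  have s2 : Summable fun m => q ^ t2 m := Hs _ fun n => by simp only [ht2]; nlinarith
  have s3 : Summable fun m => q ^ t3 m := Hs _ fun n => by simp only [ht3]; nlinarith
  have s4 : Summable fun m => q ^ t4 m := Hs _ fun n => by simp only [ht4]; nlinarith
  have s5 : Summable fun m => q ^ t5 m := Hs _ fun n => by simp only [ht5]; nlinarith
  have s7 : Summable fun m => q ^ t7 m := Hs _ fun n => by simp only [ht7]; nlinarith
  have s8 : Summable fun m => q ^ t8 m := Hs _ fun n => by simp only [ht8]; nlinarith
  have su : Summable fun m => q ^ u m := Hs _ fun n => by simp only [hu]; nlinarith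
  -- f_{2k-1}
  have h1 : fk (2 * (j+1) - 1) q = (∑' m, q ^ t1 m) - ∑' m, q ^ t5 m := by
    rw [fk]
    have he : ∀ m : ℕ, ((-1:ℂ)) ^ (2*m) * q ^ ((2*m + 1) * (2*m + 2) / 2 + (2*m + 1) * (2*(j+1) - 1 - 1)) = q ^ t1 m := by
      intro m
      rw [show 2*(j+1) - 1 - 1 = 2*j by omega, pow_mul, neg_one_sq, one_pow, one_mul,
        tri_even, show 2*m^2+3*m+1 + (2*m+1)*(2*j) = t1 m by simp only [ht1]; ring]
    have ho : ∀ m : ℕ, ((-1:ℂ)) ^ (2*m+1) * q ^ ((2*m+1 + 1) * (2*m+1 + 2) / 2 + (2*m+1 + 1) * (2*(j+1) - 1 - 1)) = -q ^ t5 m := by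
      intro m
      rw [show 2*(j+1) - 1 - 1 = 2*j by omega, pow_succ, pow_mul, neg_one_sq, one_pow, one_mul,
        show 2*m+1+1 = 2*m+2 by ring, show 2*m+1+2 = 2*m+3 by ring, tri_odd,
        show 2*m^2+5*m+3 + (2*m+2)*(2*j) = t5 m by simp only [ht5]; ring]
      ring
    rw [← tsum_even_add_odd (by exact (s1.congr fun m => (he m).symm))
        (by exact ((s5.neg).congr fun m => (ho m).symm))]
    rw [tsum_congr he, tsum_congr ho, tsum_neg]
    ring
  -- f_{2k}
  have h2 : fk (2 * (j+1)) q = (∑' m, q ^ u m) - ∑' m, q ^ t3 m := by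
    rw [fk]
    have he : ∀ m : ℕ, ((-1:ℂ)) ^ (2*m) * q ^ ((2*m + 1) * (2*m + 2) / 2 + (2*m + 1) * (2*(j+1) - 1)) = q ^ u m := by
      intro m
      rw [show 2*(j+1) - 1 = 2*j+1 by omega, pow_mul, neg_one_sq, one_pow, one_mul,
        tri_even, show 2*m^2+3*m+1 + (2*m+1)*(2*j+1) = u m by simp only [hu]; ring]
    have ho : ∀ m : ℕ, ((-1:ℂ)) ^ (2*m+1) * q ^ ((2*m+1 + 1) * (2*m+1 + 2) / 2 + (2*m+1 + 1) * (2*(j+1) - 1)) = -q ^ t3 m := by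
      intro m
      rw [show 2*(j+1) - 1 = 2*j+1 by omega, pow_succ, pow_mul, neg_one_sq, one_pow, one_mul,
        show 2*m+1+1 = 2*m+2 by ring, show 2*m+1+2 = 2*m+3 by ring, tri_odd,
        show 2*m^2+5*m+3 + (2*m+2)*(2*j+1) = t3 m by simp only [ht3]; ring]
      ring
    rw [← tsum_even_add_odd (by exact (su.congr fun m => (he m).symm))
        (by exact ((s3.neg).congr fun m => (ho m).symm))]
    rw [tsum_congr he, tsum_congr ho, tsum_neg]
    ring
  -- f_k(q²)
  have h3 : fk (j+1) (q ^ 2) = (∑' m, q ^ t2 m) - ∑' m, q ^ t4 m := by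
    rw [fk]
    have he : ∀ m : ℕ, ((-1:ℂ)) ^ (2*m) * (q ^ 2) ^ ((2*m + 1) * (2*m + 2) / 2 + (2*m + 1) * (j+1 - 1)) = q ^ t2 m := by
      intro m
      rw [show j+1-1 = j by omega, pow_mul, neg_one_sq, one_pow, one_mul, ← pow_mul,
        tri_even, show 2*(2*m^2+3*m+1 + (2*m+1)*j) = t2 m by simp only [ht2]; ring]
    have ho : ∀ m : ℕ, ((-1:ℂ)) ^ (2*m+1) * (q ^ 2) ^ ((2*m+1 + 1) * (2*m+1 + 2) / 2 + (2*m+1 + 1) * (j+1 - 1)) = -q ^ t4 m := by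
      intro m
      rw [show j+1-1 = j by omega, pow_succ, pow_mul, neg_one_sq, one_pow, one_mul, ← pow_mul,
        show 2*m+1+1 = 2*m+2 by ring, show 2*m+1+2 = 2*m+3 by ring, tri_odd,
        show 2*(2*m^2+5*m+3 + (2*m+2)*j) = t4 m by simp only [ht4]; ring]
      ring
    rw [← tsum_even_add_odd (by exact (s2.congr fun m => (he m).symm))
        (by exact ((s4.neg).congr fun m => (ho m).symm))]
    rw [tsum_congr he, tsum_congr ho, tsum_neg]
    ring
  -- shifts
  have h4 : (∑' m, q ^ u m) = q ^ (2*j+2) + ∑' m, q ^ t7 m := by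
    rw [Summable.tsum_eq_zero_add su]
    congr 1
    · congr 1; simp only [hu]; ring
    · apply tsum_congr; intro m
      congr 1
      simp only [hu, ht7]; ring
  have h5 : (∑' m, q ^ t2 m) = q ^ (2*j+2) + ∑' m, q ^ t8 m := by
    rw [Summable.tsum_eq_zero_add s2]
    congr 1
    · congr 1; simp only [ht2]; ring
    · apply tsum_congr; intro m
      congr 1
      simp only [ht2, ht8]; ring
  -- RHS decomposition
  have hR : (∑' m : ℕ,
        (q ^ ((2 * (m + 1) ^ 2 + 4 * (m + 1) * (j+1) + 2) - (5 * (m + 1) + 2 * (j+1))) *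
            (1 - q ^ (2 * (m + 1) ^ 2 - (m + 1))) * (1 - q ^ (4 * (m + 1) + 2 * (j+1) - 2)) -
          q ^ ((2 * (m + 1) ^ 2 + 4 * (m + 1) * (j+1)) - 3 * (m + 1)) *
            (1 - q ^ (2 * (m + 1) ^ 2 + (m + 1))) * (1 - q ^ (4 * (m + 1) + 2 * (j+1))))) =
      ((∑' m, q ^ t1 m) + 2 * (∑' m, q ^ t4 m) + ∑' m, q ^ t7 m) -
        ((∑' m, q ^ t2 m) + (∑' m, q ^ t3 m) + (∑' m, q ^ t5 m) + ∑' m, q ^ t8 m) := by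
    have hpt : ∀ m : ℕ,
        (q ^ ((2 * (m + 1) ^ 2 + 4 * (m + 1) * (j+1) + 2) - (5 * (m + 1) + 2 * (j+1))) *
            (1 - q ^ (2 * (m + 1) ^ 2 - (m + 1))) * (1 - q ^ (4 * (m + 1) + 2 * (j+1) - 2)) -
          q ^ ((2 * (m + 1) ^ 2 + 4 * (m + 1) * (j+1)) - 3 * (m + 1)) *
            (1 - q ^ (2 * (m + 1) ^ 2 + (m + 1))) * (1 - q ^ (4 * (m + 1) + 2 * (j+1)))) =
        (q ^ t1 m + 2 * q ^ t4 m + q ^ t7 m) -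
          (q ^ t2 m + q ^ t3 m + q ^ t5 m + q ^ t8 m) := by
      intro m
      rw [show (2 * (m + 1) ^ 2 + 4 * (m + 1) * (j+1) + 2) - (5 * (m + 1) + 2 * (j+1)) = t1 m from
            Nat.sub_eq_of_eq_add (by simp only [ht1]; ring),
          show 2 * (m + 1) ^ 2 - (m + 1) = 2*m^2+3*m+1 from Nat.sub_eq_of_eq_add (by ring),
          show 4 * (m + 1) + 2 * (j+1) - 2 = 4*m+2*j+4 from Nat.sub_eq_of_eq_add (by ring),
          show (2 * (m + 1) ^ 2 + 4 * (m + 1) * (j+1)) - 3 * (m + 1) = t5 m from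
            Nat.sub_eq_of_eq_add (by simp only [ht5]; ring),
          show 2 * (m + 1) ^ 2 + (m + 1) = 2*m^2+5*m+3 by ring,
          show 4 * (m + 1) + 2 * (j+1) = 4*m+2*j+6 by ring]
      simp only [ht1, ht2, ht3, ht4, ht5, ht7, ht8]
      ring
    rw [tsum_congr hpt,
      Summable.tsum_sub ((s1.add ((s4.mul_left 2))).add s7) (((s2.add s3).add s5).add s8),
      Summable.tsum_add (s1.add (s4.mul_left 2)) s7, Summable.tsum_add s1 (s4.mul_left 2),
      Summable.tsum_add ((s2.add s3).add s5) s8, Summable.tsum_add (s2.add s3) s5, Summable.tsum_add s2 s3, tsum_mul_left]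
  rw [h1, h2, h3, hR, h4, h5]
  ring
end
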